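/- The map k ↦ E^(k)(τ) = ∫_Ω τ(x) m^(k)(x) dx is non-decreasing in k. -/

import Mathlib

open MeasureTheory Real

/-- k ↦ E^(k)(τ) = ∫_Ω τ(x) m^(k)(x) dx is non-decreasing. -/
theorem stmt14 {n : ℕ} (Ω : Set (EuclideanSpace ℝ (Fin n)))
    (hΩc : IsCompact Ω) (hΩpos : 0 < volume Ω)
    (f : EuclideanSpace ℝ (Fin n) → ℝ) (hf : ContinuousOn f Ω)
    (ρ : ℝ → ℝ) (hρ : StrictAnti ρ) (hρpos : ∀ x ∈ Ω, 0 < ρ (f x))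
    (τ : EuclideanSpace ℝ (Fin n) → ℝ) (hτ : ∀ x, τ x = ρ (f x))
    (m : ℝ → EuclideanSpace ℝ (Fin n) → ℝ)
    (hm : ∀ k x, m k x = τ x ^ k / ∫ t in Ω, τ t ^ k) :
    Monotone (fun k : ℝ => ∫ x in Ω, τ x * m k x) := by
  have hΩm : MeasurableSet Ω := hΩc.measurableSet
  set μ : Measure (EuclideanSpace ℝ (Fin n)) := volume.restrict Ω with hμ
  have hne : Ω.Nonempty := nonempty_of_measure_ne_zero hΩpos.ne'
  obtain ⟨x₁, hx₁, hmax⟩ := hΩc.exists_isMaxOn hne hf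
  obtain ⟨x₂, hx₂, hmin⟩ := hΩc.exists_isMinOn hne hf
  set c : ℝ := ρ (f x₁) with hc_def
  set C : ℝ := ρ (f x₂) with hC_def
  have hc : 0 < c := hρpos x₁ hx₁
  have hcτ : ∀ x ∈ Ω, c ≤ τ x := by
    intro x hx; rw [hτ]; exact (hρ.antitone (hmax hx))
  have hτC : ∀ x ∈ Ω, τ x ≤ C := by
    intro x hx; rw [hτ]; exact (hρ.antitone (hmin hx))
  have hτpos : ∀ x ∈ Ω, 0 < τ x := fun x hx => hc.trans_le (hcτ x hx)
  -- measurability of τ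
  have hτm : AEMeasurable τ μ := by
    have hfm : AEMeasurable f μ := hf.aemeasurable hΩm
    have : AEMeasurable (fun x => ρ (f x)) μ :=
      hρ.antitone.measurable.comp_aemeasurable hfm
    exact this.congr (Filter.Eventually.of_forall fun x => (hτ x).symm)
  haveI : IsFiniteMeasure μ := by
    constructor
    rw [hμ, Measure.restrict_apply_univ]
    exact hΩc.measure_lt_top
  have hΩae : ∀ᵐ x ∂μ, x ∈ Ω := ae_restrict_mem hΩm
  -- powers of τ
  have hgm : ∀ r : ℝ, AEMeasurable (fun x => τ x ^ r) μ :=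
    fun r => hτm.pow aemeasurable_const
  have hub : ∀ r : ℝ, ∀ x ∈ Ω, τ x ^ r ≤ max (c ^ r) (C ^ r) := by
    intro r x hx
    rcases le_or_gt 0 r with hr | hr
    · exact le_max_of_le_right (Real.rpow_le_rpow (hτpos x hx).le (hτC x hx) hr)
    · exact le_max_of_le_left (Real.rpow_le_rpow_of_nonpos hc (hcτ x hx) hr.le)
  have hlb : ∀ r : ℝ, ∀ x ∈ Ω, min (c ^ r) (C ^ r) ≤ τ x ^ r := by
    intro r x hx
    rcases le_or_gt 0 r with hr | hr
    · exact min_le_of_left_le (Real.rpow_le_rpow hc.le (hcτ x hx) hr)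
    · exact min_le_of_right_le
        (Real.rpow_le_rpow_of_nonpos (hτpos x hx) (hτC x hx) hr.le)
  have hgpos : ∀ r : ℝ, ∀ x ∈ Ω, 0 < τ x ^ r :=
    fun r x hx => Real.rpow_pos_of_pos (hτpos x hx) r
  have hmem : ∀ r : ℝ, ∀ p : ENNReal, MemLp (fun x => τ x ^ r) p μ := by
    intro r p
    refine (memLp_top_of_bound (hgm r).aestronglyMeasurable (max (c ^ r) (C ^ r))
      ?_).mono_exponent le_top
    filter_upwards [hΩae] with x hx
    rw [Real.norm_of_nonneg (hgpos r x hx).le]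
    exact hub r x hx
  have hint : ∀ r : ℝ, Integrable (fun x => τ x ^ r) μ :=
    fun r => memLp_one_iff_integrable.mp (hmem r 1)
  set I : ℝ → ℝ := fun r => ∫ x in Ω, τ x ^ r with hI_def
  have hIpos : ∀ r : ℝ, 0 < I r := by
    intro r
    have hmc : 0 < min (c ^ r) (C ^ r) :=
      lt_min (Real.rpow_pos_of_pos hc r)
        (Real.rpow_pos_of_pos (hc.trans_le ((hcτ x₂ hx₂).trans (hτC x₂ hx₂))) r)
    have h1 : ∫ x in Ω, min (c ^ r) (C ^ r) ≤ I r := by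
      refine setIntegral_mono_on (integrable_const _) (hint r) hΩm ?_
      exact fun x hx => hlb r x hx
    have h2 : (0 : ℝ) < ∫ x in Ω, min (c ^ r) (C ^ r) := by
      rw [setIntegral_const]
      apply mul_pos _ hmc
      exact ENNReal.toReal_pos hΩpos.ne' hΩc.measure_lt_top.ne
    exact h2.trans_le h1
  -- key log-convexity inequality
  have hkey : ∀ a b : ℝ, a < b → I (a + 1) * I b ≤ I a * I (b + 1) := by
    intro a b hab
    have hd : 0 < b + 1 - a := by linarith
    set θ : ℝ := (b - a) / (b + 1 - a) with hθ_def
    have hθ : 0 < θ := div_pos (by linarith) hd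
    have hθ1 : θ < 1 := (div_lt_one hd).mpr (by linarith)
    have h1θ : 0 < 1 - θ := by linarith
    have harith1 : a * θ + (b + 1) * (1 - θ) = a + 1 := by
      rw [hθ_def]; field_simp; ring
    have harith2 : a * (1 - θ) + (b + 1) * θ = b := by
      rw [hθ_def]; field_simp; ring
    -- generic Hölder consequence
    have hold : ∀ s t : ℝ, 0 < s → 0 < t → s + t = 1 →
        I (a * s + (b + 1) * t) ≤ I a ^ s * I (b + 1) ^ t := by
      intro s t hs ht hst
      have hpq' : (1 / s).HolderConjugate (1 / t) := by
        rw [Real.holderConjugate_iff]; constructor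
        · exact one_lt_one_div hs (by linarith)
        · simp only [one_div, inv_inv]; exact hst
      have H := integral_mul_le_Lp_mul_Lq_of_nonneg (μ := μ) hpq'
        (f := fun x => τ x ^ (a * s)) (g := fun x => τ x ^ ((b + 1) * t))
        (by filter_upwards [hΩae] with x hx; exact (hgpos _ x hx).le)
        (by filter_upwards [hΩae] with x hx; exact (hgpos _ x hx).le)
        (hmem _ _) (hmem _ _)
      have e1 : ∫ x, τ x ^ (a * s) * τ x ^ ((b + 1) * t) ∂μ
          = I (a * s + (b + 1) * t) := by
        refine integral_congr_ae ?_
        filter_upwards [hΩae] with x hx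
        rw [← Real.rpow_add (hτpos x hx)]
      have e2 : ∀ u : ℝ, ∀ v : ℝ, v ≠ 0 →
          (∫ x, (τ x ^ (u * v)) ^ (1 / v) ∂μ) = I u := by
        intro u v hv
        refine integral_congr_ae ?_
        filter_upwards [hΩae] with x hx
        rw [← Real.rpow_mul (hτpos x hx).le]
        congr 1
        field_simp
      rw [e1, e2 a s hs.ne', e2 (b + 1) t ht.ne', one_div_one_div, one_div_one_div] at H
      exact H
    have h1 : I (a + 1) ≤ I a ^ θ * I (b + 1) ^ (1 - θ) := by
      have := hold θ (1 - θ) hθ h1θ (by ring)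
      rwa [harith1] at this
    have h2 : I b ≤ I a ^ (1 - θ) * I (b + 1) ^ θ := by
      have := hold (1 - θ) θ h1θ hθ (by ring)
      rwa [harith2] at this
    calc I (a + 1) * I b ≤ (I a ^ θ * I (b + 1) ^ (1 - θ)) * (I a ^ (1 - θ) * I (b + 1) ^ θ) := by
          apply mul_le_mul h1 h2 (hIpos b).le
          exact mul_nonneg (Real.rpow_nonneg (hIpos a).le _)
            (Real.rpow_nonneg (hIpos (b + 1)).le _)
      _ = (I a ^ θ * I a ^ (1 - θ)) * (I (b + 1) ^ (1 - θ) * I (b + 1) ^ θ) := by ring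
      _ = I a * I (b + 1) := by
          rw [← Real.rpow_add (hIpos a), ← Real.rpow_add (hIpos (b + 1))]
          norm_num
  -- express the expectation as a ratio
  have hE : ∀ k : ℝ, (∫ x in Ω, τ x * m k x) = I (k + 1) / I k := by
    intro k
    have h1 : ∫ x in Ω, τ x * m k x = ∫ x in Ω, τ x ^ (k + 1) / I k := by
      refine setIntegral_congr_fun hΩm ?_
      intro x hx
      show τ x * m k x = τ x ^ (k + 1) / I k
      rw [hm, Real.rpow_add (hτpos x hx), Real.rpow_one]
      show τ x * (τ x ^ k / I k) = τ x ^ k * τ x / I k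
      ring
    rw [h1, integral_div]
  intro a b hab
  rcases hab.eq_or_lt with h | h
  · subst h; exact le_refl _
  show (∫ x in Ω, τ x * m a x) ≤ ∫ x in Ω, τ x * m b x
  rw [hE a, hE b, div_le_div_iff₀ (hIpos a) (hIpos b)]
  calc I (a + 1) * I b ≤ I a * I (b + 1) := hkey a b h
    _ = I (b + 1) * I a := by ring
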